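/- Let G be a simple graph whose vertex set is the disjoint union of V(P₁) and V(P₂), where P₁ and P₂ are vertex-disjoint paths of G. Let a₁, a₂ be distinct vertices of P₁ with a₁ occurring before a₂ along P₁, and let b₁, b₂ be distinct vertices of P₂ with b₁ occurring before b₂ along P₂, such that a₁b₁ ∈ E(G) and a₂b₂ ∈ E(G), and suppose the subpaths P₁[a₁,a₂] and P₂[b₁,b₂] have orders of different parity. If there is an edge xy ∈ E(G) with x ∈ V(P₁) \ {a₁, a₂} and y ∈ V(P₂) \ {b₁, b₂}, then the prism over G is Hamiltonian, i.e. G □ K₂ has a Hamiltonian cycle. -/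

import Mathlib

open SimpleGraph

namespace PrismAux

variable {V : Type*}

lemma flip_adj (G : SimpleGraph V) : (fun a b => G.Adj b a) = G.Adj := by
  funext a b
  exact propext ⟨fun h => h.symm, fun h => h.symm⟩

lemma chain'_append_of {R : V → V → Prop} {l₁ l₂ : List V} (h₁ : l₁.IsChain R)
    (h₂ : l₂.IsChain R)
    (h : ∀ (hn₁ : l₁ ≠ []) (hn₂ : l₂ ≠ []), R (l₁.getLast hn₁) (l₂.head hn₂)) :
    (l₁ ++ l₂).IsChain R := by
  rw [List.isChain_append]
  refine ⟨h₁, h₂, ?_⟩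
  intro a ha b hb
  have hn₁ : l₁ ≠ [] := by rintro rfl; simp at ha
  have hn₂ : l₂ ≠ [] := by rintro rfl; simp at hb
  rw [List.getLast?_eq_getLast hn₁] at ha
  rw [List.head?_eq_head hn₂] at hb
  obtain rfl : l₁.getLast hn₁ = a := by injection ha
  obtain rfl : l₂.head hn₂ = b := by injection hb
  exact h hn₁ hn₂

lemma walk_of_chain (G : SimpleGraph V) : ∀ (u : V) (l : List V), List.Chain G.Adj u l →
    ∀ v, (u :: l).getLast (List.cons_ne_nil _ _) = v → ∃ p : G.Walk u v, p.support = u :: l := by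
  intro u l
  induction l generalizing u with
  | nil =>
    intro _ v hv
    simp only [List.getLast_singleton] at hv
    subst hv
    exact ⟨Walk.nil, rfl⟩
  | cons w l ih =>
    intro hc v hv
    replace hc := List.isChain_cons_cons.1 hc
    rw [List.getLast_cons (List.cons_ne_nil _ _)] at hv
    obtain ⟨q, hq⟩ := ih w hc.2 v hv
    exact ⟨Walk.cons hc.1 q, by simp [hq]⟩

lemma edge_head {G : SimpleGraph V} : ∀ {u v w : V} (p : G.Walk u v), p.support.Nodup →
    s(u, w) ∈ p.edges → p.support.tail.head? = some w := by
  intro u v w p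
  induction p with
  | nil => simp
  | @cons a b c h q ih =>
    intro hnd he
    rw [Walk.edges_cons, List.mem_cons] at he
    rcases he with he | he
    · rcases Sym2.eq_iff.mp he with ⟨-, rfl⟩ | ⟨h1, rfl⟩
      · simp only [Walk.support_cons, List.tail_cons]
        rw [q.support_eq_cons]
        rfl
      · exact absurd h1 h.ne
    · exfalso
      have hmem : a ∈ q.support := q.fst_mem_support_of_mem_edges he
      rw [Walk.support_cons, List.nodup_cons] at hnd
      exact hnd.1 hmem

lemma isHamiltonian_of_list {W : Type*} [DecidableEq W] [Fintype W] (G : SimpleGraph W)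
    (S : List W) (hne : S ≠ []) (h3 : 3 ≤ S.length) (hnd : S.Nodup)
    (hch : S.IsChain G.Adj) (hcl : G.Adj (S.getLast hne) (S.head hne))
    (hcov : ∀ w, w ∈ S) : G.IsHamiltonian := by
  intro _
  obtain ⟨s, l, rfl⟩ : ∃ s l, S = s :: l := by
    cases S with
    | nil => exact absurd rfl hne
    | cons s l => exact ⟨s, l, rfl⟩
  have hchain : List.Chain G.Adj s l := hch
  obtain ⟨p, hp⟩ := walk_of_chain G s l hchain ((s :: l).getLast (List.cons_ne_nil _ _)) rfl
  have hcl' : G.Adj ((s :: l).getLast (List.cons_ne_nil _ _)) s := hcl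
  refine ⟨_, Walk.cons hcl' p, ?_⟩
  rw [Walk.isHamiltonianCycle_iff_isCycle_and_support_count_tail_eq_one]
  constructor
  · rw [Walk.cons_isCycle_iff]
    refine ⟨by rw [Walk.isPath_def, hp]; exact hnd, ?_⟩
    intro hedge
    rw [Sym2.eq_swap] at hedge
    have h2 := edge_head p (by rw [hp]; exact hnd) hedge
    rw [hp] at h2
    simp only [List.tail_cons] at h2
    cases l with
    | nil => simp at h3
    | cons a l' =>
      simp only [List.head?_cons, Option.some.injEq] at h2
      have hl' : l' ≠ [] := by
        rintro rfl
        simp at h3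
      have htlast : a = l'.getLast hl' := by
        rw [h2, List.getLast_cons (List.cons_ne_nil _ _), List.getLast_cons hl']
      have hmem : a ∈ l' := htlast ▸ List.getLast_mem hl'
      rw [List.nodup_cons, List.nodup_cons] at hnd
      exact hnd.2.1 hmem
  · intro a
    rw [Walk.support_cons, hp]
    simp only [List.tail_cons]
    exact List.count_eq_one_of_mem hnd (hcov a)

/-! ### The prism gadget -/

def gad (ε : Fin 2) (z : V × List V) : List (V × Fin 2) :=
  (z.1 :: z.2).map (fun v => (v, ε)) ++ ((z.1 :: z.2).reverse).map (fun v => (v, ε + 1))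

def build : Fin 2 → List (V × List V) → List (V × Fin 2)
  | _, [] => []
  | ε, z :: L => gad ε z ++ build (ε + 1) L

lemma fin2_cases (ε δ : Fin 2) : δ = ε ∨ δ = ε + 1 := by revert ε δ; decide

lemma fin2_ne (ε : Fin 2) : ε ≠ ε + 1 := by revert ε; decide

lemma fin2_add_self (c : Fin 2) : c + c = 0 := by revert c; decide

lemma gad_ne_nil (ε : Fin 2) (z : V × List V) : gad ε z ≠ [] := by simp [gad]

lemma head_gad (ε : Fin 2) (z : V × List V) (h : gad ε z ≠ []) :
    (gad ε z).head h = (z.1, ε) := by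
  simp [gad]

lemma getLast_gad (ε : Fin 2) (z : V × List V) (h : gad ε z ≠ []) :
    (gad ε z).getLast h = (z.1, ε + 1) := by
  unfold gad
  simp only [List.reverse_cons, List.map_append, List.map_cons, List.map_nil,
    ← List.append_assoc]
  exact List.getLast_append_singleton _

lemma fst_of_mem_gad {ε : Fin 2} {z : V × List V} {q : V × Fin 2} (hq : q ∈ gad ε z) :
    q.1 ∈ z.1 :: z.2 := by
  simp only [gad, List.mem_append, List.mem_map, List.mem_reverse] at hq
  rcases hq with ⟨v, hv, rfl⟩ | ⟨v, hv, rfl⟩ <;> exact hv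

lemma mem_gad {ε : Fin 2} {z : V × List V} {w : V} (δ : Fin 2) (hw : w ∈ z.1 :: z.2) :
    (w, δ) ∈ gad ε z := by
  rcases fin2_cases ε δ with rfl | rfl
  · exact List.mem_append_left _ (List.mem_map.2 ⟨w, hw, rfl⟩)
  · exact List.mem_append_right _ (List.mem_map.2 ⟨w, List.mem_reverse.2 hw, rfl⟩)

lemma nodup_gad {ε : Fin 2} {z : V × List V} (hz : (z.1 :: z.2).Nodup) :
    (gad ε z).Nodup := by
  refine List.Nodup.append ?_ ?_ ?_
  · exact hz.map (fun a b h => congrArg Prod.fst h)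
  · exact (List.nodup_reverse.2 hz).map (fun a b h => congrArg Prod.fst h)
  · intro q hq1 hq2
    rw [List.mem_map] at hq1 hq2
    obtain ⟨v, -, rfl⟩ := hq1
    obtain ⟨v', -, h⟩ := hq2
    have : ε + 1 = ε := congrArg Prod.snd h
    exact fin2_ne ε this.symm

lemma chain'_gad (G : SimpleGraph V) {ε : Fin 2} {z : V × List V}
    (hz : (z.1 :: z.2).IsChain G.Adj) :
    (gad ε z).IsChain (G □ (⊤ : SimpleGraph (Fin 2))).Adj := by
  refine chain'_append_of ?_ ?_ ?_
  · rw [List.isChain_map]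
    exact hz.imp (fun a b h => boxProd_adj_left.2 h)
  · rw [List.isChain_map]
    rw [List.isChain_reverse]
    refine hz.imp (fun a b h => ?_)
    exact boxProd_adj_left.2 h.symm
  · intro h1 h2
    have hne : (z.1 :: z.2) ≠ [] := List.cons_ne_nil _ _
    have e1 : ((z.1 :: z.2).map (fun v => (v, ε))).getLast h1
        = ((z.1 :: z.2).getLast hne, ε) := by
      rw [List.getLast_map]
    have e2 : (((z.1 :: z.2).reverse).map (fun v => (v, ε + 1))).head h2
        = ((z.1 :: z.2).getLast hne, ε + 1) := by
      rw [List.head_map, List.head_reverse]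
    rw [e1, e2]
    exact boxProd_adj_right.2 (by simp [fin2_ne ε])

lemma build_ne_nil (ε : Fin 2) {L : List (V × List V)} (h : L ≠ []) : build ε L ≠ [] := by
  cases L with
  | nil => exact absurd rfl h
  | cons z L => simp [build, gad_ne_nil]

lemma head_build (ε : Fin 2) {L : List (V × List V)} (h : L ≠ []) (h' : build ε L ≠ []) :
    (build ε L).head h' = ((L.head h).1, ε) := by
  cases L with
  | nil => exact absurd rfl h
  | cons z L =>
    simp only [build]
    rw [List.head_append_of_ne_nil (gad_ne_nil _ _), head_gad]
    rfl

open Fin.CommRing in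
lemma getLast_build : ∀ (ε : Fin 2) {L : List (V × List V)} (h : L ≠ []) (h' : build ε L ≠ []),
    (build ε L).getLast h' = ((L.getLast h).1, ε + (L.length : Fin 2)) := by
  intro ε L
  induction L generalizing ε with
  | nil => intro h; exact absurd rfl h
  | cons z L ih =>
    intro h h'
    cases L with
    | nil =>
      show ((gad ε z ++ build (ε + 1) []).getLast _) = _
      simp only [build, List.append_nil]
      rw [getLast_gad]
      simp
    | cons z' L' =>
      simp only [build.eq_2 ε z]
      rw [List.getLast_append_of_ne_nil _ (build_ne_nil _ (List.cons_ne_nil _ _))]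
      rw [ih (ε + 1) (List.cons_ne_nil _ _)]
      rw [List.getLast_cons (List.cons_ne_nil _ _)]
      congr 1
      simp only [List.length_cons]
      push_cast
      ring

lemma length_build : ∀ (ε : Fin 2) (L : List (V × List V)),
    (build ε L).length = 2 * ((L.map (fun z => z.1 :: z.2)).flatten).length := by
  intro ε L
  induction L generalizing ε with
  | nil => rfl
  | cons z L ih =>
    show (gad ε z ++ build (ε + 1) L).length = _
    rw [List.length_append, ih (ε + 1)]
    simp only [gad, List.length_append, List.length_map, List.length_reverse,
      List.map_cons, List.flatten_cons, List.length_cons]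
    ring

lemma le_flatten_length (L : List (V × List V)) :
    L.length ≤ ((L.map (fun z => z.1 :: z.2)).flatten).length := by
  induction L with
  | nil => simp
  | cons z L ih => simp only [List.map_cons, List.flatten_cons, List.length_append,
      List.length_cons]; omega

lemma fst_of_mem_build : ∀ {ε : Fin 2} {L : List (V × List V)} {q : V × Fin 2},
    q ∈ build ε L → q.1 ∈ (L.map (fun z => z.1 :: z.2)).flatten := by
  intro ε L
  induction L generalizing ε with
  | nil => intro q h; exact absurd h (by simp [build])
  | cons z L ih =>
    intro q hq
    rcases List.mem_append.1 hq with h | h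
    · simp only [List.map_cons, List.flatten_cons, List.mem_append]
      exact Or.inl (fst_of_mem_gad h)
    · simp only [List.map_cons, List.flatten_cons, List.mem_append]
      exact Or.inr (ih h)

lemma mem_build : ∀ {L : List (V × List V)} (ε : Fin 2) (w : V) (δ : Fin 2),
    w ∈ (L.map (fun z => z.1 :: z.2)).flatten → (w, δ) ∈ build ε L := by
  intro L
  induction L with
  | nil => intro ε w δ h; simp at h
  | cons z L ih =>
    intro ε w δ h
    simp only [List.map_cons, List.flatten_cons, List.mem_append] at h
    rcases h with h | h
    · exact List.mem_append_left _ (mem_gad δ h)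
    · exact List.mem_append_right _ (ih (ε + 1) w δ h)

lemma nodup_build : ∀ {L : List (V × List V)} (ε : Fin 2),
    ((L.map (fun z => z.1 :: z.2)).flatten).Nodup → (build ε L).Nodup := by
  intro L
  induction L with
  | nil => intro ε _; simp [build]
  | cons z L ih =>
    intro ε h
    simp only [List.map_cons, List.flatten_cons, List.nodup_append] at h
    refine List.Nodup.append (nodup_gad h.1) (ih (ε + 1) h.2.1) ?_
    intro q hq1 hq2
    exact h.2.2 _ (fst_of_mem_gad hq1) _ (fst_of_mem_build hq2) rfl

lemma chain'_build (G : SimpleGraph V) : ∀ {L : List (V × List V)} (ε : Fin 2),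
    (L.map Prod.fst).IsChain G.Adj → (∀ z ∈ L, (z.1 :: z.2).IsChain G.Adj) →
    (build ε L).IsChain (G □ (⊤ : SimpleGraph (Fin 2))).Adj := by
  intro L
  induction L with
  | nil => intro ε _ _; simp [build]
  | cons z L ih =>
    intro ε hch hz
    refine chain'_append_of (chain'_gad G (hz z (List.mem_cons_self))) ?_ ?_
    · refine ih (ε + 1) ?_ (fun z' hz' => hz z' (List.mem_cons_of_mem _ hz'))
      rw [List.map_cons] at hch
      exact hch.tail
    · intro h1 h2
      have hL : L ≠ [] := by
        rintro rfl
        exact h2 rfl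
      rw [getLast_gad, head_build _ hL]
      cases L with
      | nil => exact absurd rfl hL
      | cons z' L' =>
        have hadj : G.Adj z.1 z'.1 := by
          rw [List.map_cons, List.map_cons, List.isChain_cons_cons] at hch
          exact hch.1
        exact boxProd_adj_left.2 hadj

/-! ### Lemma A : even cycle with pendant paths has Hamiltonian prism -/

open Fin.CommRing in
lemma lemA [DecidableEq V] [Fintype V] (G : SimpleGraph V) (L : List (V × List V))
    (hne : L ≠ []) (heven : Even L.length)
    (hch : (L.map Prod.fst).IsChain G.Adj)
    (hcl : G.Adj (L.getLast hne).1 (L.head hne).1)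
    (hz : ∀ z ∈ L, (z.1 :: z.2).IsChain G.Adj)
    (hnd : ((L.map (fun z => z.1 :: z.2)).flatten).Nodup)
    (hcov : ∀ v : V, v ∈ (L.map (fun z => z.1 :: z.2)).flatten) :
    (G □ (⊤ : SimpleGraph (Fin 2))).IsHamiltonian := by
  have hSne : build 0 L ≠ [] := build_ne_nil 0 hne
  refine isHamiltonian_of_list _ (build 0 L) hSne ?_ (nodup_build 0 hnd)
    (chain'_build G 0 hch hz) ?_ ?_
  · rw [length_build]
    have h1 := le_flatten_length L
    have h2 : 2 ≤ L.length := by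
      rcases heven with ⟨k, hk⟩
      have : L.length ≠ 0 := fun h => hne (List.length_eq_zero_iff.1 h)
      omega
    omega
  · rw [getLast_build 0 hne hSne, head_build 0 hne hSne]
    have hcast : ((L.length : ℕ) : Fin 2) = 0 := by
      rcases heven with ⟨k, hk⟩
      rw [hk]
      push_cast
      exact fin2_add_self _
    rw [hcast, add_zero]
    exact boxProd_adj_left.2 hcl
  · rintro ⟨w, δ⟩
    exact mem_build 0 w δ (hcov w)

/-! ### List surgery : extracting the cycle-with-tails structure -/

lemma getElem_eq_of_eq {l : List V} {n m : ℕ} (e : n = m) (hn : n < l.length)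
    (hm : m < l.length) : l[n]'hn = l[m]'hm := by subst e; rfl

lemma decomp [DecidableEq V] {l : List V} {u w : V} (hu : u ∈ l) (hw : w ∈ l)
    (hlt : l.idxOf u < l.idxOf w) :
    ∃ X M Y, l = X ++ u :: (M ++ w :: Y) ∧ l.idxOf w - l.idxOf u = M.length + 1 := by
  have hi : l.idxOf u < l.length := List.idxOf_lt_length_iff.2 hu
  have hj : l.idxOf w < l.length := List.idxOf_lt_length_iff.2 hw
  have h1 : l = l.take (l.idxOf u) ++ u :: l.drop (l.idxOf u + 1) := by
    conv_lhs => rw [← List.take_append_drop (l.idxOf u) l]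
    rw [List.drop_eq_getElem_cons hi, List.getElem_idxOf hi]
  have hjj : l.idxOf w - l.idxOf u - 1 < (l.drop (l.idxOf u + 1)).length := by
    rw [List.length_drop]; omega
  have h2 : (l.drop (l.idxOf u + 1))[l.idxOf w - l.idxOf u - 1]'hjj = w := by
    rw [List.getElem_drop]
    exact (getElem_eq_of_eq (by omega) _ hj).trans (List.getElem_idxOf hj)
  have h3 : l.drop (l.idxOf u + 1)
      = (l.drop (l.idxOf u + 1)).take (l.idxOf w - l.idxOf u - 1)
        ++ w :: (l.drop (l.idxOf u + 1)).drop (l.idxOf w - l.idxOf u - 1 + 1) := by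
    conv_lhs => rw [← List.take_append_drop (l.idxOf w - l.idxOf u - 1)
      (l.drop (l.idxOf u + 1))]
    rw [List.drop_eq_getElem_cons hjj, h2]
  refine ⟨l.take (l.idxOf u), (l.drop (l.idxOf u + 1)).take (l.idxOf w - l.idxOf u - 1),
    (l.drop (l.idxOf u + 1)).drop (l.idxOf w - l.idxOf u - 1 + 1), ?_, ?_⟩
  · conv_lhs => rw [h1]
    conv_lhs => rw [h3]
  · have hlen : ((l.drop (l.idxOf u + 1)).take (l.idxOf w - l.idxOf u - 1)).length
        = l.idxOf w - l.idxOf u - 1 := by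
      rw [List.length_take, List.length_drop]
      omega
    omega

lemma flatten_singleton_map (M : List V) : ((M.map (fun v => [v])).flatten) = M := by
  induction M with
  | nil => rfl
  | cons a M ih => simp [ih]

lemma flatten_reverse_perm (L : List (List V)) : (L.reverse.flatten).Perm L.flatten := by
  induction L with
  | nil => simp
  | cons z L ih =>
    simp only [List.reverse_cons, List.flatten_append, List.flatten_cons, List.flatten_nil,
      List.append_nil]
    exact (ih.append_right z).trans List.perm_append_comm

lemma seg_exists_lt [DecidableEq V] (G : SimpleGraph V) {l : List V} (hnd : l.Nodup)
    (hch : l.IsChain G.Adj) {u w : V} (hu : u ∈ l) (hw : w ∈ l)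
    (hlt : l.idxOf u < l.idxOf w) :
    ∃ (s : List (V × List V)) (hs : s ≠ []),
      (s.head hs).1 = u ∧ (s.getLast hs).1 = w ∧
      (s.map Prod.fst).IsChain G.Adj ∧ (∀ z ∈ s, (z.1 :: z.2).IsChain G.Adj) ∧
      ((s.map (fun z => z.1 :: z.2)).flatten).Perm l ∧
      s.length = Nat.dist (l.idxOf u) (l.idxOf w) + 1 := by
  obtain ⟨X, M, Y, hl, hM⟩ := decomp hu hw hlt
  have hdist : Nat.dist (l.idxOf u) (l.idxOf w) = M.length + 1 := by
    rw [Nat.dist_eq_sub_of_le hlt.le]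
    exact hM
  refine ⟨(u, X.reverse) :: (M.map (fun v => (v, ([] : List V))) ++ [(w, Y)]),
    List.cons_ne_nil _ _, rfl, ?_, ?_, ?_, ?_, ?_⟩
  · rw [List.getLast_cons (by simp)]
    rw [List.getLast_append_of_ne_nil _ (by simp)]
    rfl
  · have hmap : (((u, X.reverse) :: (M.map (fun v => (v, ([] : List V))) ++ [(w, Y)])).map
        Prod.fst) = u :: (M ++ [w]) := by
      have e : (Prod.fst ∘ fun v : V => (v, ([] : List V))) = id := rfl
      simp only [List.map_cons, List.map_append, List.map_map, e, List.map_id,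
        List.map_singleton, List.map_nil]
    rw [hmap]
    have c1 : (u :: (M ++ w :: Y)).IsChain G.Adj := hch.suffix ⟨X, hl.symm⟩
    refine c1.prefix ⟨Y, ?_⟩
    simp
  · intro z hz
    rcases List.mem_cons.1 hz with rfl | hz
    · have e : u :: X.reverse = (X ++ [u]).reverse := by
        rw [List.reverse_append]
        rfl
      show (u :: X.reverse).IsChain G.Adj
      rw [e, List.isChain_reverse, flip_adj]
      refine hch.prefix ⟨M ++ w :: Y, ?_⟩
      rw [hl]
      simp
    · rcases List.mem_append.1 hz with hz | hz
      · obtain ⟨v, -, rfl⟩ := List.mem_map.1 hz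
        simp
      · rw [List.mem_singleton] at hz
        subst hz
        show (w :: Y).IsChain G.Adj
        exact hch.suffix ⟨X ++ u :: M, by rw [hl]; simp⟩
  · have hflat : ((((u, X.reverse) :: (M.map (fun v => (v, ([] : List V))) ++ [(w, Y)])).map
        (fun z => z.1 :: z.2)).flatten) = (u :: X.reverse) ++ (M ++ (w :: Y)) := by
      simp only [List.map_cons, List.map_append, List.map_map, List.flatten_cons,
        List.flatten_append]
      have : (M.map ((fun z : V × List V => z.1 :: z.2) ∘ (fun v => (v, ([] : List V)))))
          = M.map (fun v => [v]) := by
        simp [Function.comp]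
      rw [this, flatten_singleton_map]
      simp
    rw [hflat]
    conv_rhs => rw [hl]
    refine ((X.reverse_perm.cons u).append_right _).trans ?_
    have e : (X ++ [u]) ++ (M ++ w :: Y) = X ++ u :: (M ++ w :: Y) := by simp
    exact e ▸ (List.perm_append_comm (l₁ := [u]) (l₂ := X)).append_right _
  · simp only [List.length_cons, List.length_append, List.length_map, List.length_singleton,
      List.length_nil, hdist]

lemma seg_exists [DecidableEq V] (G : SimpleGraph V) {l : List V} (hnd : l.Nodup)
    (hch : l.IsChain G.Adj) {u w : V} (hu : u ∈ l) (hw : w ∈ l) (huw : u ≠ w) :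
    ∃ (s : List (V × List V)) (hs : s ≠ []),
      (s.head hs).1 = u ∧ (s.getLast hs).1 = w ∧
      (s.map Prod.fst).IsChain G.Adj ∧ (∀ z ∈ s, (z.1 :: z.2).IsChain G.Adj) ∧
      ((s.map (fun z => z.1 :: z.2)).flatten).Perm l ∧
      s.length = Nat.dist (l.idxOf u) (l.idxOf w) + 1 := by
  have hne' : l.idxOf u ≠ l.idxOf w := fun h => huw ((List.idxOf_inj hu).1 h)
  rcases lt_or_gt_of_ne hne' with h | h
  · exact seg_exists_lt G hnd hch hu hw h
  · obtain ⟨s, hs, h1, h2, h3, h4, h5, h6⟩ := seg_exists_lt G hnd hch hw hu h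
    refine ⟨s.reverse, by simp [hs], ?_, ?_, ?_, ?_, ?_, ?_⟩
    · rw [List.head_reverse]
      exact h2
    · rw [List.getLast_reverse]
      exact h1
    · rw [List.map_reverse, List.isChain_reverse, flip_adj]
      exact h3
    · intro z hz
      exact h4 z (List.mem_reverse.1 hz)
    · rw [List.map_reverse]
      exact (flatten_reverse_perm _).trans h5
    · rw [List.length_reverse, h6, Nat.dist_comm]

/-! ### Lemma B -/

lemma lemB [DecidableEq V] [Fintype V] (G : SimpleGraph V) (l₁ l₂ : List V)
    (h₁n : l₁.Nodup) (h₂n : l₂.Nodup)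
    (h₁c : l₁.IsChain G.Adj) (h₂c : l₂.IsChain G.Adj)
    (hdisj : ∀ v ∈ l₁, v ∉ l₂) (hcov : ∀ v, v ∈ l₁ ∨ v ∈ l₂)
    (a x : V) (ha : a ∈ l₁) (hx : x ∈ l₁) (hax : x ≠ a)
    (b y : V) (hb : b ∈ l₂) (hy : y ∈ l₂) (hby : y ≠ b)
    (hab : G.Adj a b) (hxy : G.Adj x y)
    (hpar : Even (Nat.dist (l₁.idxOf x) (l₁.idxOf a)
      + Nat.dist (l₂.idxOf b) (l₂.idxOf y))) :
    (G □ (⊤ : SimpleGraph (Fin 2))).IsHamiltonian := by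
  obtain ⟨s₁, hs₁, e₁h, e₁l, c₁, z₁, p₁, len₁⟩ := seg_exists G h₁n h₁c hx ha hax
  obtain ⟨s₂, hs₂, e₂h, e₂l, c₂, z₂, p₂, len₂⟩ := seg_exists G h₂n h₂c hb hy (fun h => hby h.symm)
  have hLne : s₁ ++ s₂ ≠ [] := by simp [hs₁]
  have hperm : (((s₁ ++ s₂).map (fun z => z.1 :: z.2)).flatten).Perm (l₁ ++ l₂) := by
    rw [List.map_append, List.flatten_append]
    exact p₁.append p₂
  refine lemA G (s₁ ++ s₂) hLne ?_ ?_ ?_ ?_ ?_ ?_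
  · rcases hpar with ⟨m, hm⟩
    rw [List.length_append, len₁, len₂]
    exact ⟨m + 1, by omega⟩
  · rw [List.map_append]
    refine chain'_append_of c₁ c₂ ?_
    intro hn₁ hn₂
    have g1 : (s₁.map Prod.fst).getLast hn₁ = (s₁.getLast hs₁).1 := by
      rw [List.getLast_map]
    have g2 : (s₂.map Prod.fst).head hn₂ = (s₂.head hs₂).1 := by
      rw [List.head_map]
    rw [g1, g2, e₁l, e₂h]
    exact hab
  · rw [List.getLast_append_of_ne_nil _ hs₂, List.head_append_of_ne_nil hs₁, e₂l, e₁h]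
    exact hxy.symm
  · intro z hz
    rcases List.mem_append.1 hz with hz | hz
    · exact z₁ z hz
    · exact z₂ z hz
  · refine hperm.nodup_iff.2 ?_
    exact h₁n.append h₂n (fun v hv => hdisj v hv)
  · intro v
    refine hperm.mem_iff.2 ?_
    rcases hcov v with hv | hv
    · exact List.mem_append_left _ hv
    · exact List.mem_append_right _ hv

end PrismAux

open PrismAux in
/-- Suppose the vertex set of `G` is the disjoint union of two vertex-disjoint paths
`P₁` and `P₂`, with `a₁` before `a₂` on `P₁` and `b₁` before `b₂` on `P₂`
(positions along a path are measured by `List.indexOf` in its support),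
`a₁b₁, a₂b₂ ∈ E(G)`, and the subpaths `P₁[a₁,a₂]` and `P₂[b₁,b₂]` have orders of
different parity.  If there is an edge `xy ∈ E(G)` with `x ∈ V(P₁) \ {a₁, a₂}` and
`y ∈ V(P₂) \ {b₁, b₂}`, then the prism `G □ K₂` is Hamiltonian. -/
theorem prism_hamiltonian_of_cross_edge {V : Type*} [Fintype V] [DecidableEq V]
    (G : SimpleGraph V) {s₁ t₁ s₂ t₂ : V}
    (P₁ : G.Walk s₁ t₁) (P₂ : G.Walk s₂ t₂) (hP₁ : P₁.IsPath) (hP₂ : P₂.IsPath)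
    (hdisj : ∀ x, x ∈ P₁.support → x ∉ P₂.support)
    (hcover : ∀ x : V, x ∈ P₁.support ∨ x ∈ P₂.support)
    (a₁ a₂ b₁ b₂ : V)
    (ha₁ : a₁ ∈ P₁.support) (ha₂ : a₂ ∈ P₁.support)
    (hb₁ : b₁ ∈ P₂.support) (hb₂ : b₂ ∈ P₂.support)
    (ha : P₁.support.idxOf a₁ < P₁.support.idxOf a₂)
    (hb : P₂.support.idxOf b₁ < P₂.support.idxOf b₂)
    (hab₁ : G.Adj a₁ b₁) (hab₂ : G.Adj a₂ b₂)
    (hpar : (P₁.support.idxOf a₂ - P₁.support.idxOf a₁ + 1) % 2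
          ≠ (P₂.support.idxOf b₂ - P₂.support.idxOf b₁ + 1) % 2)
    (x y : V) (hx : x ∈ P₁.support) (hxa : x ≠ a₁ ∧ x ≠ a₂)
    (hy : y ∈ P₂.support) (hyb : y ≠ b₁ ∧ y ≠ b₂)
    (hadj : G.Adj x y) :
    (G □ (⊤ : SimpleGraph (Fin 2))).IsHamiltonian := by
  have h₁n := hP₁.support_nodup
  have h₂n := hP₂.support_nodup
  have h₁c := P₁.isChain_adj_support
  have h₂c := P₂.isChain_adj_support
  by_cases hc : Even (Nat.dist (P₁.support.idxOf x) (P₁.support.idxOf a₁)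
      + Nat.dist (P₂.support.idxOf b₁) (P₂.support.idxOf y))
  · exact lemB G P₁.support P₂.support h₁n h₂n h₁c h₂c hdisj hcover
      a₁ x ha₁ hx hxa.1 b₁ y hb₁ hy hyb.1 hab₁ hadj hc
  · refine lemB G P₁.support P₂.support h₁n h₂n h₁c h₂c hdisj hcover
      a₂ x ha₂ hx hxa.2 b₂ y hb₂ hy hyb.2 hab₂ hadj ?_
    have hd : ∀ m n : ℕ, Nat.dist m n = m - n + (n - m) := fun _ _ => rfl
    rw [Nat.even_iff] at hc ⊢
    rw [hd, hd] at hc ⊢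
    omega
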